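/- Let Ω ∈ ℝ^{m×n} have singular value decomposition UΣVᵀ with all singular values in (0,1). Then the maximizer over matrices Â ∈ ℝ^{n×m} with ‖Â‖₂ < 1 of the function Â ↦ Tr(ÂΩ) + (1/2)log|I_m − ÂᵀÂ| is Â* = V h(Σ) Uᵀ, where h(σ) = (√(1+4σ²)−1)/(2σ) is applied entrywise to the diagonal of Σ, and the maximum value is Σᵢ [Σ_ii h(Σ_ii) + (1/2)log(1 − h(Σ_ii)²)]. -/

import Mathlib

open Matrix

noncomputable def hfun (σ : ℝ) : ℝ := (Real.sqrt (1 + 4 * σ ^ 2) - 1) / (2 * σ)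

def rdiag (n m : ℕ) (σ : ℕ → ℝ) : Matrix (Fin n) (Fin m) ℝ :=
  Matrix.of fun i j => if (i : ℕ) = (j : ℕ) then σ (i : ℕ) else 0


lemma hfun_pos {σ : ℝ} (hσ : 0 < σ) : 0 < hfun σ := by
  have h1 : (1:ℝ) < Real.sqrt (1 + 4 * σ ^ 2) := by
    nlinarith [Real.sq_sqrt (show (0:ℝ) ≤ 1 + 4 * σ ^ 2 by positivity),
      Real.sqrt_nonneg (1 + 4 * σ ^ 2)]
  unfold hfun
  exact div_pos (by linarith) (by positivity)

lemma hfun_lt_one {σ : ℝ} (hσ : 0 < σ) : hfun σ < 1 := by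
  unfold hfun
  rw [div_lt_one (by positivity)]
  have : Real.sqrt (1 + 4 * σ ^ 2) < 1 + 2 * σ := by
    rw [show (1 + 2*σ : ℝ) = Real.sqrt ((1 + 2*σ)^2) from (Real.sqrt_sq (by positivity)).symm]
    exact Real.sqrt_lt_sqrt (by positivity) (by nlinarith)
  linarith

lemma hfun_eq {σ : ℝ} (hσ : 0 < σ) : σ * (1 - hfun σ ^ 2) = hfun σ := by
  have hs : Real.sqrt (1 + 4 * σ ^ 2) ^ 2 = 1 + 4 * σ ^ 2 :=
    Real.sq_sqrt (by positivity)
  unfold hfun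
  generalize hq : Real.sqrt (1 + 4 * σ ^ 2) = q at hs ⊢
  field_simp
  nlinarith [hs]

lemma scalar_max {σ b : ℝ} (hσ : 0 < σ) (hb : b ^ 2 < 1) :
    σ * b + (1/2) * Real.log (1 - b ^ 2) ≤ σ * hfun σ + (1/2) * Real.log (1 - hfun σ ^ 2) := by
  have hh0 := hfun_pos hσ
  have hh1 := hfun_lt_one hσ
  have heq := hfun_eq hσ
  set h := hfun σ with hdef
  have h1 : 0 < 1 - h ^ 2 := by nlinarith
  have hb1 : 0 < 1 - b ^ 2 := by linarith
  have hlog : Real.log (1 - b ^ 2) - Real.log (1 - h ^ 2)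
      ≤ (1 - b ^ 2) / (1 - h ^ 2) - 1 := by
    rw [← Real.log_div (ne_of_gt hb1) (ne_of_gt h1)]
    exact Real.log_le_sub_one_of_pos (by positivity)
  have hσeq : σ = h / (1 - h ^ 2) := by
    field_simp
    linarith [heq]
  have expand : σ * b - σ * h + (1/2) * ((1 - b ^ 2) / (1 - h ^ 2) - 1)
      = -(1/2) * (h - b) ^ 2 / (1 - h ^ 2) := by
    rw [hσeq]
    field_simp
    ring
  have key : σ * b - σ * h + (1/2) * ((1 - b ^ 2) / (1 - h ^ 2) - 1) ≤ 0 := by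
    rw [expand]
    apply div_nonpos_of_nonpos_of_nonneg
    · nlinarith [sq_nonneg (h - b)]
    · linarith
  linarith

lemma posdef_diag_pos {k : ℕ} {M : Matrix (Fin k) (Fin k) ℝ} (hM : M.PosDef) (i : Fin k) :
    0 < M i i := by
  have hx : (Pi.single i 1 : Fin k → ℝ) ≠ 0 := by
    intro h
    have := congrFun h i
    simp at this
  have := hM.dotProduct_mulVec_pos hx
  simpa [dotProduct, mulVec, Pi.single_apply, Finset.sum_ite_eq, mul_ite] using this

lemma posdef_conj {k : ℕ} {M U : Matrix (Fin k) (Fin k) ℝ} (hM : M.PosDef)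
    (hU : ∀ x : Fin k → ℝ, x ≠ 0 → U *ᵥ x ≠ 0) : (Uᵀ * M * U).PosDef := by
  have hMs : Mᵀ = M := hM.1
  refine Matrix.PosDef.of_dotProduct_mulVec_pos ?_ ?_
  · show (Uᵀ * M * U)ᴴ = _
    simp only [conjTranspose_eq_transpose_of_trivial, transpose_mul, transpose_transpose, hMs,
      mul_assoc]
  · intro x hx
    have := hM.dotProduct_mulVec_pos (hU x hx)
    simpa [star_trivial, ← mulVec_mulVec, dotProduct_mulVec, vecMul_transpose] using this

lemma trace_eq_sum_eigenvalues {k : ℕ} {M : Matrix (Fin k) (Fin k) ℝ} (hM : M.IsHermitian) :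
    M.trace = ∑ i, hM.eigenvalues i := by
  simpa using hM.trace_eq_sum_eigenvalues

lemma hadamard_det_le {k : ℕ} {M : Matrix (Fin k) (Fin k) ℝ} (hM : M.PosDef) :
    M.det ≤ ∏ i, M i i := by
  have hdpos : ∀ i, 0 < M i i := posdef_diag_pos hM
  set e : Fin k → ℝ := fun i => (Real.sqrt (M i i))⁻¹ with he
  have hepos : ∀ i, 0 < e i := fun i => by
    have := hdpos i
    have : 0 < Real.sqrt (M i i) := Real.sqrt_pos.mpr this
    positivity
  set D := diagonal e with hD
  have hDt : Dᵀ = D := diagonal_transpose e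
  have hC : (Dᵀ * M * D).PosDef := by
    apply posdef_conj hM
    intro x hx h0
    obtain ⟨j, hj⟩ := Function.ne_iff.mp hx
    have hval : (D *ᵥ x) j = e j * x j := by
      simp [hD, mulVec, dotProduct, diagonal_apply, Finset.sum_ite_eq, ite_mul]
    have h1 : e j * x j = 0 := by rw [← hval, h0]; rfl
    rcases mul_eq_zero.mp h1 with h | h
    · exact ne_of_gt (hepos j) h
    · exact hj h
  set C := Dᵀ * M * D with hCdef
  have hCh : C.IsHermitian := hC.1
  have hCdiag : ∀ i, C i i = 1 := by
    intro i
    have : C i i = e i * M i i * e i := by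
      simp [hCdef, hDt, hD, diagonal_mul, mul_diagonal]
    have hs : Real.sqrt (M i i) * Real.sqrt (M i i) = M i i :=
      Real.mul_self_sqrt (le_of_lt (hdpos i))
    have hs0 : Real.sqrt (M i i) ≠ 0 := ne_of_gt (Real.sqrt_pos.mpr (hdpos i))
    rw [this, he]
    simp only
    rw [← hs]
    field_simp
    rw [Real.sqrt_sq (Real.sqrt_nonneg _)]
  have hdetC : C.det = ∏ i, hCh.eigenvalues i := by
    simpa using hCh.det_eq_prod_eigenvalues
  have htrC : (k : ℝ) = ∑ i, hCh.eigenvalues i := by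
    rw [← trace_eq_sum_eigenvalues hCh]
    unfold Matrix.trace
    simp [Matrix.diag, hCdiag]
  have hev : ∀ i, 0 < hCh.eigenvalues i := fun i => hC.eigenvalues_pos i
  have hlogle : Real.log C.det ≤ 0 := by
    rw [hdetC, Real.log_prod (fun i _ => ne_of_gt (hev i))]
    calc ∑ i, Real.log (hCh.eigenvalues i) ≤ ∑ i, (hCh.eigenvalues i - 1) :=
          Finset.sum_le_sum fun i _ => Real.log_le_sub_one_of_pos (hev i)
      _ = 0 := by rw [Finset.sum_sub_distrib]; simp [← htrC]
  have hdet0 : 0 < C.det := hC.det_pos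
  have hdetC1 : C.det ≤ 1 := by
    by_contra hcon
    push_neg at hcon
    have := Real.log_pos hcon
    linarith
  have hdetfact : C.det = (∏ i, e i) ^ 2 * M.det := by
    rw [hCdef, det_mul, det_mul, hDt, hD, det_diagonal]
    ring
  have hprod : (∏ i, e i) ^ 2 = (∏ i, M i i)⁻¹ := by
    rw [← Finset.prod_pow, ← Finset.prod_inv_distrib]
    refine Finset.prod_congr rfl fun i _ => ?_
    rw [he]
    simp only
    rw [sq, ← mul_inv, Real.mul_self_sqrt (le_of_lt (hdpos i))]
  have hP : 0 < ∏ i, M i i := Finset.prod_pos fun i _ => hdpos i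
  rw [hdetfact, hprod] at hdetC1
  calc M.det = (∏ i, M i i)⁻¹ * M.det * (∏ i, M i i) := by field_simp
    _ ≤ 1 * (∏ i, M i i) := by
        apply mul_le_mul_of_nonneg_right hdetC1 (le_of_lt hP)
    _ = ∏ i, M i i := one_mul _



/-- Diagonal entry of a rectangular matrix, as a function of `ℕ`. -/
noncomputable def dEnt {m n : ℕ} (B : Matrix (Fin n) (Fin m) ℝ) (i : ℕ) : ℝ :=
  if h : i < n ∧ i < m then B ⟨i, h.1⟩ ⟨i, h.2⟩ else 0

lemma sum_fin_shrink {k r : ℕ} (hrk : r ≤ k) (F : ℕ → ℝ)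
    (hF : ∀ i, r ≤ i → i < k → F i = 0) :
    ∑ i : Fin k, F ↑i = ∑ i ∈ Finset.range r, F i := by
  rw [Fin.sum_univ_eq_sum_range F k]
  exact (Finset.sum_subset (Finset.range_subset_range.mpr hrk)
    (fun x hx hx' => hF x (by simpa using hx') (by simpa using hx))).symm

lemma trace_mul_rdiag {m n : ℕ} (B : Matrix (Fin n) (Fin m) ℝ) (σ : ℕ → ℝ) :
    (B * rdiag m n σ).trace = ∑ i ∈ Finset.range (min m n), dEnt B i * σ i := by
  have step1 : ∀ j : Fin n, (B * rdiag m n σ) j j = dEnt B ↑j * σ ↑j := by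
    intro j
    rw [mul_apply]
    by_cases h : (j : ℕ) < m
    · rw [Finset.sum_eq_single (⟨(j : ℕ), h⟩ : Fin m)]
      · simp [rdiag, dEnt, j.isLt, h]
      · intro i _ hij
        have : (i : ℕ) ≠ (j : ℕ) := fun hc => hij (Fin.ext hc)
        simp [rdiag, this]
      · intro hc
        exact absurd (Finset.mem_univ _) hc
    · rw [Finset.sum_eq_zero]
      · unfold dEnt; rw [dif_neg (by tauto), zero_mul]
      · intro i _
        have : (i : ℕ) ≠ (j : ℕ) := by omega
        simp [rdiag, this]
  unfold Matrix.trace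
  simp only [Matrix.diag, step1]
  exact sum_fin_shrink (Nat.min_le_right m n) (fun i => dEnt B i * σ i)
    (fun i hi hi' => by simp only [dEnt, dif_neg (show ¬(i < n ∧ i < m) by omega), zero_mul])

lemma rdiag_transpose_mul {n m : ℕ} (τ : ℕ → ℝ) :
    (rdiag n m τ)ᵀ * rdiag n m τ =
      Matrix.diagonal (fun i : Fin m => if (i : ℕ) < n then τ (i : ℕ) ^ 2 else 0) := by
  ext i j
  rw [mul_apply]
  by_cases hij : i = j
  · subst hij
    by_cases hin : (i : ℕ) < n
    · rw [Finset.sum_eq_single (⟨(i : ℕ), hin⟩ : Fin n)]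
      · simp [rdiag, hin, diagonal_apply, sq]
      · intro k _ hk
        have : (k : ℕ) ≠ (i : ℕ) := fun hc => hk (Fin.ext hc)
        simp [rdiag, this]
      · intro hc
        exact absurd (Finset.mem_univ _) hc
    · rw [Finset.sum_eq_zero]
      · simp [diagonal_apply, hin]
      · intro k _
        have : (k : ℕ) ≠ (i : ℕ) := by omega
        simp [rdiag, this]
  · rw [Finset.sum_eq_zero]
    · simp [diagonal_apply, hij]
    · intro k _
      have : (k : ℕ) ≠ (i : ℕ) ∨ (k : ℕ) ≠ (j : ℕ) := by
        by_contra hc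
        push_neg at hc
        exact hij (Fin.ext (hc.1.symm.trans hc.2))
      rcases this with h | h
      · simp [rdiag, transpose_apply, h]
      · simp [rdiag, transpose_apply, h]

lemma dEnt_sq_le {m n : ℕ} (B : Matrix (Fin n) (Fin m) ℝ) (i : Fin m) :
    dEnt B ↑i ^ 2 ≤ (Bᵀ * B) i i := by
  have hBB : (Bᵀ * B) i i = ∑ k, B k i ^ 2 := by
    simp [mul_apply, sq]
  rw [hBB]
  unfold dEnt
  by_cases h : (i : ℕ) < n ∧ (i : ℕ) < m
  · rw [dif_pos h]
    have : (⟨(i : ℕ), h.2⟩ : Fin m) = i := Fin.ext rfl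
    rw [this]
    exact Finset.single_le_sum (fun k _ => sq_nonneg (B k i)) (Finset.mem_univ (⟨(i : ℕ), h.1⟩ : Fin n))
  · rw [dif_neg h]
    simpa using Finset.sum_nonneg (fun k _ => sq_nonneg (B k i))

theorem stmt14 {m n : ℕ} (Ω : Matrix (Fin m) (Fin n) ℝ)
    (U : Matrix (Fin m) (Fin m) ℝ) (V : Matrix (Fin n) (Fin n) ℝ) (σ : ℕ → ℝ)
    (hU : Uᵀ * U = 1) (hV : Vᵀ * V = 1)
    (hσ : ∀ i, i < min m n → 0 < σ i ∧ σ i < 1)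
    (hSVD : Ω = U * rdiag m n σ * Vᵀ) :
    (∀ Ahat : Matrix (Fin n) (Fin m) ℝ,
        ((1 : Matrix (Fin m) (Fin m) ℝ) - Ahatᵀ * Ahat).PosDef →
        (Ahat * Ω).trace + (1/2) * Real.log ((1 - Ahatᵀ * Ahat).det)
          ≤ ((V * rdiag n m (fun k => hfun (σ k)) * Uᵀ) * Ω).trace
            + (1/2) * Real.log
              ((1 - (V * rdiag n m (fun k => hfun (σ k)) * Uᵀ)ᵀ *
                  (V * rdiag n m (fun k => hfun (σ k)) * Uᵀ)).det))
    ∧ ((V * rdiag n m (fun k => hfun (σ k)) * Uᵀ) * Ω).trace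
        + (1/2) * Real.log
          ((1 - (V * rdiag n m (fun k => hfun (σ k)) * Uᵀ)ᵀ *
              (V * rdiag n m (fun k => hfun (σ k)) * Uᵀ)).det)
      = ∑ i ∈ Finset.range (min m n),
          (σ i * hfun (σ i) + (1/2) * Real.log (1 - (hfun (σ i)) ^ 2)) := by
  have hUU : U * Uᵀ = 1 := mul_eq_one_comm.mp hU
  have hVV : V * Vᵀ = 1 := mul_eq_one_comm.mp hV
  set S : Matrix (Fin m) (Fin n) ℝ := rdiag m n σ with hS
  set H : Matrix (Fin n) (Fin m) ℝ := rdiag n m (fun k => hfun (σ k)) with hH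
  set A : Matrix (Fin n) (Fin m) ℝ := V * H * Uᵀ with hA
  have hfσ : ∀ i, i < min m n → 0 < hfun (σ i) ∧ hfun (σ i) < 1 := fun i hi =>
    ⟨hfun_pos (hσ i hi).1, hfun_lt_one (hσ i hi).1⟩
  have hdetU : ∀ X : Matrix (Fin m) (Fin m) ℝ, (U * X * Uᵀ).det = X.det := by
    intro X
    have h1 : Uᵀ.det * U.det = 1 := by
      have := congrArg Matrix.det hU
      rwa [Matrix.det_mul, Matrix.det_one] at this
    rw [Matrix.det_transpose] at h1
    rw [Matrix.det_mul, Matrix.det_mul, Matrix.det_transpose]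
    calc U.det * X.det * U.det = X.det * (U.det * U.det) := by ring
      _ = X.det := by rw [h1, mul_one]
  -- the value at the maximizer
  have hdH : ∀ i, i < min m n → dEnt H i = hfun (σ i) := by
    intro i hi
    unfold dEnt
    rw [dif_pos ⟨(by omega), (by omega)⟩]
    simp [hH, rdiag]
  have hval : (A * Ω).trace + (1/2) * Real.log ((1 - Aᵀ * A).det)
      = ∑ i ∈ Finset.range (min m n),
          (σ i * hfun (σ i) + (1/2) * Real.log (1 - hfun (σ i) ^ 2)) := by
    have htr : (A * Ω).trace = ∑ i ∈ Finset.range (min m n), hfun (σ i) * σ i := by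
      have h1 : A * Ω = V * (H * S) * Vᵀ := by
        rw [hSVD, hA]
        simp only [Matrix.mul_assoc]
        rw [← Matrix.mul_assoc Uᵀ U, hU, Matrix.one_mul]
      rw [h1, Matrix.trace_mul_cycle, ← Matrix.mul_assoc, hV, Matrix.one_mul, hS,
        trace_mul_rdiag]
      exact Finset.sum_congr rfl fun i hi => by rw [hdH i (Finset.mem_range.mp hi)]
    have h2 : Aᵀ * A = U * (Hᵀ * H) * Uᵀ := by
      rw [hA]
      simp only [Matrix.transpose_mul, Matrix.transpose_transpose, Matrix.mul_assoc]
      rw [← Matrix.mul_assoc Vᵀ V, hV, Matrix.one_mul]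
    have hAtA : 1 - Aᵀ * A = U * (1 - Hᵀ * H) * Uᵀ := by
      rw [h2, Matrix.mul_sub, Matrix.sub_mul, Matrix.mul_one, hUU]
    have hdiag : (1 : Matrix (Fin m) (Fin m) ℝ) - Hᵀ * H =
        Matrix.diagonal (fun i : Fin m =>
          1 - (if (i : ℕ) < n then hfun (σ (i : ℕ)) ^ 2 else 0)) := by
      rw [hH, rdiag_transpose_mul, ← Matrix.diagonal_one, Matrix.diagonal_sub]
    have hdpos : ∀ i : Fin m, (0:ℝ) <
        1 - (if (i : ℕ) < n then hfun (σ (i : ℕ)) ^ 2 else 0) := by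
      intro i
      by_cases h : (i : ℕ) < n
      · have hmin : (i : ℕ) < min m n := lt_min i.isLt h
        have := hfσ _ hmin
        rw [if_pos h]
        nlinarith [this.1, this.2]
      · rw [if_neg h]; norm_num
    have hlog : Real.log ((1 - Aᵀ * A).det)
        = ∑ i ∈ Finset.range (min m n), Real.log (1 - hfun (σ i) ^ 2) := by
      rw [hAtA, hdetU, hdiag, Matrix.det_diagonal,
        Real.log_prod (fun i _ => ne_of_gt (hdpos i))]
      rw [sum_fin_shrink (Nat.min_le_left m n)
        (fun i => Real.log (1 - (if i < n then hfun (σ i) ^ 2 else 0)))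
        (fun i hi hi' => by simp [show ¬ i < n by omega])]
      exact Finset.sum_congr rfl fun i hi => by
        have h : i < n := by have := Finset.mem_range.mp hi; omega
        simp [h]
    rw [htr, hlog, Finset.mul_sum, ← Finset.sum_add_distrib]
    exact Finset.sum_congr rfl fun i _ => by ring
  refine ⟨?_, hval⟩
  intro Ahat hP
  rw [hval]
  set B : Matrix (Fin n) (Fin m) ℝ := Vᵀ * Ahat * U with hB
  have hAhat : Ahat = V * B * Uᵀ := by
    rw [hB]
    simp only [Matrix.mul_assoc]
    rw [hUU, Matrix.mul_one, ← Matrix.mul_assoc V Vᵀ, hVV, Matrix.one_mul]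
  have htrB : (Ahat * Ω).trace = (B * S).trace := by
    have h1 : Ahat * Ω = V * (B * S) * Vᵀ := by
      rw [hSVD]
      conv_lhs => rw [hAhat]
      simp only [Matrix.mul_assoc]
      rw [← Matrix.mul_assoc Uᵀ U, hU, Matrix.one_mul]
    rw [h1, Matrix.trace_mul_cycle, ← Matrix.mul_assoc, hV, Matrix.one_mul]
  have hBB : Ahatᵀ * Ahat = U * (Bᵀ * B) * Uᵀ := by
    conv_lhs => rw [hAhat]
    simp only [Matrix.transpose_mul, Matrix.transpose_transpose, Matrix.mul_assoc]
    rw [← Matrix.mul_assoc Vᵀ V, hV, Matrix.one_mul]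
  have hsub : (1 : Matrix (Fin m) (Fin m) ℝ) - Ahatᵀ * Ahat = U * (1 - Bᵀ * B) * Uᵀ := by
    rw [hBB, Matrix.mul_sub, Matrix.sub_mul, Matrix.mul_one, hUU]
  have hdet : ((1 : Matrix (Fin m) (Fin m) ℝ) - Ahatᵀ * Ahat).det = (1 - Bᵀ * B).det := by
    rw [hsub, hdetU]
  have hNpos : ((1 : Matrix (Fin m) (Fin m) ℝ) - Bᵀ * B).PosDef := by
    have h3 : (1 : Matrix (Fin m) (Fin m) ℝ) - Bᵀ * B
        = Uᵀ * (1 - Ahatᵀ * Ahat) * U := by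
      rw [hsub]
      simp only [Matrix.mul_assoc]
      rw [← Matrix.mul_assoc Uᵀ U, hU, Matrix.one_mul, Matrix.mul_one]
    rw [h3]
    apply posdef_conj hP
    intro x hx hc
    apply hx
    have hxx : x = Uᵀ *ᵥ (U *ᵥ x) := by rw [mulVec_mulVec, hU, one_mulVec]
    rw [hxx, hc, mulVec_zero]
  set N : Matrix (Fin m) (Fin m) ℝ := 1 - Bᵀ * B with hNdef
  have hdpos2 : ∀ i : Fin m, 0 < N i i := posdef_diag_pos hNpos
  have hNle : ∀ i : Fin m, N i i ≤ 1 - dEnt B ↑i ^ 2 := by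
    intro i
    have h1 : N i i = 1 - (Bᵀ * B) i i := by
      rw [hNdef, Matrix.sub_apply, Matrix.one_apply_eq]
    have := dEnt_sq_le B i
    linarith
  have hb2 : ∀ i : Fin m, dEnt B ↑i ^ 2 < 1 := fun i => by
    have := hdpos2 i; have := hNle i; linarith
  have hlogdet : Real.log N.det ≤ ∑ i ∈ Finset.range (min m n),
      Real.log (1 - dEnt B i ^ 2) := by
    have c1 : Real.log N.det ≤ ∑ i : Fin m, Real.log (1 - dEnt B ↑i ^ 2) := by
      calc Real.log N.det ≤ Real.log (∏ i, N i i) :=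
            Real.log_le_log hNpos.det_pos (hadamard_det_le hNpos)
        _ = ∑ i : Fin m, Real.log (N i i) :=
            Real.log_prod (fun i _ => ne_of_gt (hdpos2 i))
        _ ≤ ∑ i : Fin m, Real.log (1 - dEnt B ↑i ^ 2) :=
            Finset.sum_le_sum fun i _ => Real.log_le_log (hdpos2 i) (hNle i)
    have c2 : ∑ i : Fin m, Real.log (1 - dEnt B ↑i ^ 2)
        = ∑ i ∈ Finset.range (min m n), Real.log (1 - dEnt B i ^ 2) :=
      sum_fin_shrink (Nat.min_le_left m n) (fun i => Real.log (1 - dEnt B i ^ 2))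
        (fun i hi hi' => by
          show Real.log (1 - dEnt B i ^ 2) = 0
          unfold dEnt
          rw [dif_neg (show ¬(i < n ∧ i < m) by omega)]
          simp)
    rw [← c2]; exact c1
  rw [htrB, hdet, hS, trace_mul_rdiag]
  have step : ∑ i ∈ Finset.range (min m n), dEnt B i * σ i
      + (1/2) * Real.log ((1 - Bᵀ * B).det)
      ≤ ∑ i ∈ Finset.range (min m n),
          (dEnt B i * σ i + (1/2) * Real.log (1 - dEnt B i ^ 2)) := by
    rw [Finset.sum_add_distrib, ← Finset.mul_sum]
    have := hlogdet
    nlinarith [hlogdet]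
  refine le_trans step (Finset.sum_le_sum fun i hi => ?_)
  have him : i < min m n := Finset.mem_range.mp hi
  have hb : dEnt B i ^ 2 < 1 := by
    have h := hb2 ⟨i, lt_of_lt_of_le him (Nat.min_le_left m n)⟩
    simpa using h
  have := scalar_max (hσ i him).1 hb
  linarith [this, mul_comm (dEnt B i) (σ i)]
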